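/- Let A be a finite label set with |A| = k, m ≥ 1, y : {1,…,m} → A, η ∈ ℝ, γ ∈ [0,1], F : {1,…,m} × A → ℝ, and h : {1,…,m} → A. With L(i) = Σ_{ã≠y_i} exp(η·(F(i,ã) − F(i,y_i))) and L̃ = (1/m)·Σ_i L(i), suppose the update cost of h is no larger than that of the edge-γ random guesser, i.e. (1/m)·[ Σ_{i : h(i)=y_i} (e^{−η} − 1)·L(i) + Σ_{i : h(i)≠y_i} (e^{η} − 1)·exp(η·(F(i, h(i)) − F(i, y_i))) ] ≤ (1/m)·Σ_i [ ((1−γ)/k + γ)·(e^{−η} − 1) + ((1−γ)/k)·(e^{η} − 1) ]·L(i). Then the updated average loss L̃' (computed from F'(i,a) = F(i,a) + 1[h(i)=a]) satisfies L̃' ≤ (1 + ((1−γ)/k + γ)·(e^{−η} − 1) + ((1−γ)/k)·(e^{η} − 1))·L̃. -/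

import Mathlib

/-- One-round contraction of the multiclass exponential loss: if the update cost of the
weak hypothesis `h` is no larger than that of the edge-`γ` random guesser, then the
updated average loss satisfies
`L̃' ≤ (1 + ((1−γ)/k + γ)(e^{−η}−1) + ((1−γ)/k)(e^{η}−1))·L̃`. -/
theorem multiclass_loss_contraction {A : Type*} [Fintype A] [DecidableEq A]
    (k : ℕ) (hk : Fintype.card A = k)
    (m : ℕ) (hm : 1 ≤ m)
    (y : Fin m → A) (η γ : ℝ) (hγ0 : 0 ≤ γ) (hγ1 : γ ≤ 1)
    (F : Fin m → A → ℝ) (h : Fin m → A)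
    (F' : Fin m → A → ℝ)
    (hF' : ∀ i a, F' i a = F i a + (if h i = a then (1 : ℝ) else 0))
    (L L' : Fin m → ℝ)
    (hL : ∀ i, L i =
      ∑ b ∈ Finset.univ.erase (y i), Real.exp (η * (F i b - F i (y i))))
    (hL' : ∀ i, L' i =
      ∑ b ∈ Finset.univ.erase (y i), Real.exp (η * (F' i b - F' i (y i))))
    (hweak : (1 / (m : ℝ)) *
        ((∑ i ∈ Finset.univ.filter (fun i => h i = y i), (Real.exp (-η) - 1) * L i)
          + ∑ i ∈ Finset.univ.filter (fun i => h i ≠ y i),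
              (Real.exp η - 1) * Real.exp (η * (F i (h i) - F i (y i)))) ≤
      (1 / (m : ℝ)) * ∑ i,
        (((1 - γ) / (k : ℝ) + γ) * (Real.exp (-η) - 1)
          + ((1 - γ) / (k : ℝ)) * (Real.exp η - 1)) * L i) :
    (1 / (m : ℝ)) * ∑ i, L' i ≤
      (1 + ((1 - γ) / (k : ℝ) + γ) * (Real.exp (-η) - 1)
         + ((1 - γ) / (k : ℝ)) * (Real.exp η - 1)) * ((1 / (m : ℝ)) * ∑ i, L i) := by
  set c : ℝ := ((1 - γ) / (k : ℝ) + γ) * (Real.exp (-η) - 1)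
    + ((1 - γ) / (k : ℝ)) * (Real.exp η - 1) with hc
  have key : ∀ i, L' i = L i + (if h i = y i then (Real.exp (-η) - 1) * L i
      else (Real.exp η - 1) * Real.exp (η * (F i (h i) - F i (y i)))) := by
    intro i
    by_cases hcase : h i = y i
    · rw [if_pos hcase, hL', hL]
      have congr1 : ∀ b ∈ Finset.univ.erase (y i),
          Real.exp (η * (F' i b - F' i (y i)))
            = Real.exp (-η) * Real.exp (η * (F i b - F i (y i))) := by
        intro b hb
        have hb' : y i ≠ b := (Finset.ne_of_mem_erase hb).symm
        rw [hF', hF', hcase, if_neg hb', if_pos rfl, ← Real.exp_add]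
        ring_nf
      rw [Finset.sum_congr rfl congr1, ← Finset.mul_sum]
      ring
    · rw [if_neg hcase, hL', hL]
      have hmem : h i ∈ Finset.univ.erase (y i) :=
        Finset.mem_erase.mpr ⟨hcase, Finset.mem_univ _⟩
      have congr1 : ∀ b ∈ Finset.univ.erase (y i),
          Real.exp (η * (F' i b - F' i (y i)))
            = Real.exp (η * (F i b - F i (y i)))
              + (if b = h i then (Real.exp η - 1) * Real.exp (η * (F i b - F i (y i))) else 0) := by
        intro b hb
        have hy : h i ≠ y i := hcase
        rw [hF', hF', if_neg hy]
        by_cases hbh : b = h i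
        · rw [if_pos hbh, if_pos hbh.symm]
          have e1 : η * (F i b + 1 - (F i (y i) + 0)) = η + η * (F i b - F i (y i)) := by ring
          rw [e1, Real.exp_add]; ring
        · rw [if_neg hbh, if_neg (fun e => hbh e.symm)]
          ring_nf
      rw [Finset.sum_congr rfl congr1, Finset.sum_add_distrib,
        Finset.sum_ite_eq' (Finset.univ.erase (y i)) (h i)
          (fun b => (Real.exp η - 1) * Real.exp (η * (F i b - F i (y i)))),
        if_pos hmem]
  have hsum : ∑ i, L' i = ∑ i, L i
      + ((∑ i ∈ Finset.univ.filter (fun i => h i = y i), (Real.exp (-η) - 1) * L i)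
        + ∑ i ∈ Finset.univ.filter (fun i => h i ≠ y i),
            (Real.exp η - 1) * Real.exp (η * (F i (h i) - F i (y i)))) := by
    rw [Finset.sum_congr rfl (fun i _ => key i), Finset.sum_add_distrib, Finset.sum_ite]
  have hmpos : (0:ℝ) ≤ 1 / (m : ℝ) := by positivity
  have h2 : (1 / (m : ℝ)) * ∑ i, L' i
      ≤ (1 / (m : ℝ)) * ∑ i, L i + (1 / (m : ℝ)) * ∑ i, c * L i := by
    rw [hsum, mul_add]
    exact add_le_add (le_refl _) hweak
  calc (1 / (m : ℝ)) * ∑ i, L' i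
      ≤ (1 / (m : ℝ)) * ∑ i, L i + (1 / (m : ℝ)) * ∑ i, c * L i := h2
    _ = (1 + c) * ((1 / (m : ℝ)) * ∑ i, L i) := by
        rw [← Finset.mul_sum]; ring
    _ = (1 + ((1 - γ) / (k : ℝ) + γ) * (Real.exp (-η) - 1)
         + ((1 - γ) / (k : ℝ)) * (Real.exp η - 1)) * ((1 / (m : ℝ)) * ∑ i, L i) := by
        rw [hc]; ring
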